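/- Let n ≥ 2 and let 0 = α_1 ≤ α_2 ≤ … ≤ α_{n+1} be the eigenvalues (with multiplicity) of M. Then α_1 = 0 is a simple eigenvalue, α_i > 0 for 2 ≤ i ≤ n+1, and ∑_{i=2}^{n+1} 1/α_i = (49n³ + 63n² + 38n)/(6(7n+3)). -/

import Mathlib

open Polynomial

/-- The tridiagonal matrix `M` (of size `(n+1) × (n+1)`). -/
noncomputable def Mmat (n : ℕ) : Matrix (Fin (n+1)) (Fin (n+1)) ℝ :=
  Matrix.of fun i j =>
    if i = j then (if i.val = 0 ∨ i.val = n then 1/5 else 2/7)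
    else if i.val + 1 = j.val ∨ j.val + 1 = i.val then
      (if min i.val j.val = 0 ∨ max i.val j.val = n then -(1/Real.sqrt 35) else -(1/7))
    else 0


open Matrix

noncomputable def dvec (n j : ℕ) : ℝ := if j = 0 ∨ j = n then 1/Real.sqrt 5 else 1/Real.sqrt 7

noncomputable def Cmat (n : ℕ) : Matrix (Fin n) (Fin (n+1)) ℝ :=
  Matrix.of fun i j =>
    if j.val = i.val then dvec n j.val else if j.val = i.val + 1 then -(dvec n j.val) else 0

noncomputable def Kmat (n : ℕ) : Matrix (Fin n) (Fin n) ℝ :=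
  Matrix.of fun i k =>
    if i = k then (if i.val = 0 ∨ i.val + 1 = n then 12/35 else 2/7)
    else if i.val + 1 = k.val ∨ k.val + 1 = i.val then -(1/7) else 0

noncomputable def Gmat (n : ℕ) : Matrix (Fin n) (Fin n) ℝ :=
  Matrix.of fun i j =>
    (7*((min i.val j.val : ℕ):ℝ)+5) * (7*(n:ℝ) - 2 - 7*((max i.val j.val : ℕ):ℝ)) / (7*(n:ℝ)+3)

lemma fin_sum_one {n a : ℕ} (ha : a < n) (f : Fin n → ℝ) (c : ℝ)
    (h : ∀ k : Fin n, f k = if k.val = a then c else 0) : ∑ k, f k = c := by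
  have : ∀ k : Fin n, f k = if k = (⟨a, ha⟩ : Fin n) then c else 0 := by
    intro k; rw [h k]; simp [Fin.ext_iff]
  rw [Finset.sum_congr rfl (fun k _ => this k), Finset.sum_ite_eq']
  simp

lemma fin_sum_two {n a b : ℕ} (ha : a < n) (hb : b < n) (hab : a ≠ b) (f : Fin n → ℝ) (c₁ c₂ : ℝ)
    (h : ∀ k : Fin n, f k = if k.val = a then c₁ else if k.val = b then c₂ else 0) :
    ∑ k, f k = c₁ + c₂ := by
  have : ∀ k : Fin n, f k =
      (if k = (⟨a, ha⟩ : Fin n) then c₁ else 0) + (if k = (⟨b, hb⟩ : Fin n) then c₂ else 0) := by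
    intro k; rw [h k]
    by_cases h1 : k.val = a
    · simp [Fin.ext_iff, h1, hab]
    · by_cases h2 : k.val = b <;> simp [Fin.ext_iff, h1, h2, hab.symm]
  rw [Finset.sum_congr rfl (fun k _ => this k), Finset.sum_add_distrib]
  simp [Finset.sum_ite_eq']

lemma fin_sum_three {n a b c : ℕ} (ha : a < n) (hb : b < n) (hc : c < n)
    (hab : a ≠ b) (hac : a ≠ c) (hbc : b ≠ c) (f : Fin n → ℝ) (c₁ c₂ c₃ : ℝ)
    (h : ∀ k : Fin n, f k =
      if k.val = a then c₁ else if k.val = b then c₂ else if k.val = c then c₃ else 0) :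
    ∑ k, f k = c₁ + c₂ + c₃ := by
  have : ∀ k : Fin n, f k =
      (if k = (⟨a, ha⟩ : Fin n) then c₁ else 0) + (if k = (⟨b, hb⟩ : Fin n) then c₂ else 0)
        + (if k = (⟨c, hc⟩ : Fin n) then c₃ else 0) := by
    intro k; rw [h k]
    by_cases h1 : k.val = a
    · simp [Fin.ext_iff, h1, hab, hac]
    · by_cases h2 : k.val = b
      · simp [Fin.ext_iff, h1, h2, hab.symm, hbc]
      · by_cases h3 : k.val = c <;> simp [Fin.ext_iff, h1, h2, h3, hac.symm, hbc.symm]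
  rw [Finset.sum_congr rfl (fun k _ => this k), Finset.sum_add_distrib, Finset.sum_add_distrib]
  simp [Finset.sum_ite_eq']


lemma sqrt5' : (1:ℝ)/Real.sqrt 5 * (1/Real.sqrt 5) = 1/5 := by
  rw [div_mul_div_comm, one_mul, Real.mul_self_sqrt (by norm_num)]

lemma sqrt7' : (1:ℝ)/Real.sqrt 7 * (1/Real.sqrt 7) = 1/7 := by
  rw [div_mul_div_comm, one_mul, Real.mul_self_sqrt (by norm_num)]

lemma sqrt57 : (1:ℝ)/Real.sqrt 5 * (1/Real.sqrt 7) = 1/Real.sqrt 35 := by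
  rw [div_mul_div_comm, one_mul, ← Real.sqrt_mul (by norm_num : (0:ℝ) ≤ 5)]
  norm_num

lemma dvec_sq (n j : ℕ) : dvec n j * dvec n j = if j = 0 ∨ j = n then 1/5 else 1/7 := by
  unfold dvec
  split_ifs
  · exact sqrt5'
  · exact sqrt7'

lemma dvec_adj (n : ℕ) (hn : 2 ≤ n) (a : ℕ) (ha : a + 1 ≤ n) :
    dvec n a * dvec n (a+1) = if a = 0 ∨ a + 1 = n then 1/Real.sqrt 35 else 1/7 := by
  unfold dvec
  by_cases h0 : a = 0 <;> by_cases hN : a + 1 = n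
  · omega
  · rw [if_pos (Or.inl h0), if_neg (by omega : ¬(a+1 = 0 ∨ a+1 = n)),
      if_pos (Or.inl h0), sqrt57]
  · rw [if_neg (by omega : ¬(a = 0 ∨ a = n)), if_pos (Or.inr hN),
      if_pos (Or.inr hN), mul_comm, sqrt57]
  · rw [if_neg (by omega : ¬(a = 0 ∨ a = n)), if_neg (by omega : ¬(a+1 = 0 ∨ a+1 = n)),
      if_neg (by omega : ¬(a = 0 ∨ a + 1 = n)), sqrt7']

lemma CtC (n : ℕ) (hn : 2 ≤ n) : (Cmat n)ᵀ * Cmat n = Mmat n := by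
  ext j k
  rw [Matrix.mul_apply]
  simp only [Matrix.transpose_apply]
  by_cases hd : j = k
  · subst hd
    have hM : Mmat n j j = if j.val = 0 ∨ j.val = n then 1/5 else 2/7 := by
      simp [Mmat]
    rw [hM]
    by_cases h0 : j.val = 0
    · rw [if_pos (Or.inl h0)]
      apply fin_sum_one (show 0 < n by omega)
      intro i
      simp only [Cmat, Matrix.of_apply]
      by_cases h1 : j.val = i.val
      · rw [if_pos h1, if_pos (by omega : i.val = 0), dvec_sq, if_pos (Or.inl h0)]
      · rw [if_neg h1, if_neg (by omega : ¬ j.val = i.val + 1),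
          if_neg (by omega : ¬ i.val = 0), zero_mul]
    · by_cases hN : j.val = n
      · rw [if_pos (Or.inr hN)]
        apply fin_sum_one (show n - 1 < n by omega)
        intro i
        have hi := i.isLt
        simp only [Cmat, Matrix.of_apply]
        by_cases h1 : j.val = i.val
        · exfalso; omega
        · by_cases h2 : j.val = i.val + 1
          · rw [if_neg h1, if_pos h2, if_pos (by omega : i.val = n - 1)]
            have := dvec_sq n j.val
            rw [if_pos (Or.inr hN)] at this
            calc -(dvec n j.val) * -(dvec n j.val) = dvec n j.val * dvec n j.val := by ring
            _ = 1/5 := this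
          · rw [if_neg h1, if_neg h2, if_neg (by omega : ¬ i.val = n - 1), zero_mul]
      · rw [if_neg (by omega : ¬(j.val = 0 ∨ j.val = n)),
          show (2:ℝ)/7 = 1/7 + 1/7 by norm_num]
        have hjlt := j.isLt
        have h77 : dvec n j.val * dvec n j.val = 1/7 := by
          rw [dvec_sq, if_neg (by omega : ¬(j.val = 0 ∨ j.val = n))]
        apply fin_sum_two (show j.val < n by omega) (show j.val - 1 < n by omega)
          (show j.val ≠ j.val - 1 by omega)
        intro i
        simp only [Cmat, Matrix.of_apply]
        by_cases h1 : j.val = i.val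
        · rw [if_pos h1, if_pos h1.symm, h77]
        · by_cases h2 : j.val = i.val + 1
          · rw [if_neg h1, if_pos h2, if_neg (by omega : ¬ i.val = j.val),
              if_pos (by omega : i.val = j.val - 1)]
            calc -(dvec n j.val) * -(dvec n j.val) = dvec n j.val * dvec n j.val := by ring
            _ = 1/7 := h77
          · rw [if_neg h1, if_neg h2, zero_mul,
              if_neg (by omega : ¬ i.val = j.val), if_neg (by omega : ¬ i.val = j.val - 1)]
  · have hd' : ¬ j.val = k.val := fun h => hd (Fin.ext h)
    by_cases hadj1 : j.val + 1 = k.val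
    · have hk1 : k.val = j.val + 1 := hadj1.symm
      have hklt := k.isLt
      have hM : Mmat n j k = if j.val = 0 ∨ j.val + 1 = n then -(1/Real.sqrt 35) else -(1/7) := by
        simp only [Mmat, Matrix.of_apply, if_neg hd, if_pos (Or.inl hadj1)]
        rw [min_eq_left (by omega : j.val ≤ k.val), max_eq_right (by omega : j.val ≤ k.val), hk1]
      rw [hM]
      have hval : dvec n j.val * -(dvec n (j.val + 1))
          = if j.val = 0 ∨ j.val + 1 = n then -(1/Real.sqrt 35) else -(1/7) := by
        rw [mul_neg, dvec_adj n hn j.val (by omega)]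
        split_ifs <;> norm_num
      rw [← hval]
      apply fin_sum_one (show j.val < n by omega)
      intro i
      simp only [Cmat, Matrix.of_apply]
      by_cases h1 : j.val = i.val
      · rw [if_pos h1, if_neg (by omega : ¬ k.val = i.val),
          if_pos (by omega : k.val = i.val + 1), if_pos (by omega : i.val = j.val), hk1]
      · by_cases h2 : j.val = i.val + 1
        · rw [if_neg h1, if_pos h2, if_neg (by omega : ¬ k.val = i.val),
            if_neg (by omega : ¬ k.val = i.val + 1), mul_zero,
            if_neg (by omega : ¬ i.val = j.val)]
        · rw [if_neg h1, if_neg h2, zero_mul, if_neg (by omega : ¬ i.val = j.val)]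
    · by_cases hadj2 : k.val + 1 = j.val
      · have hj1 : j.val = k.val + 1 := hadj2.symm
        have hjlt := j.isLt
        have hM : Mmat n j k = if k.val = 0 ∨ k.val + 1 = n then -(1/Real.sqrt 35) else -(1/7) := by
          simp only [Mmat, Matrix.of_apply, if_neg hd, if_pos (Or.inr hadj2)]
          rw [min_eq_right (by omega : k.val ≤ j.val), max_eq_left (by omega : k.val ≤ j.val), hj1]
        rw [hM]
        have hval : -(dvec n (k.val + 1)) * dvec n k.val
            = if k.val = 0 ∨ k.val + 1 = n then -(1/Real.sqrt 35) else -(1/7) := by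
          rw [neg_mul, mul_comm, dvec_adj n hn k.val (by omega)]
          split_ifs <;> norm_num
        rw [← hval]
        apply fin_sum_one (show k.val < n by omega)
        intro i
        simp only [Cmat, Matrix.of_apply]
        by_cases h1 : k.val = i.val
        · rw [if_neg (by omega : ¬ j.val = i.val), if_pos (by omega : j.val = i.val + 1),
            if_pos h1, if_pos (by omega : i.val = k.val), hj1]
        · by_cases h2 : j.val = i.val
          · rw [if_pos h2, if_neg h1, if_neg (by omega : ¬ k.val = i.val + 1), mul_zero,
              if_neg (by omega : ¬ i.val = k.val)]
          · by_cases h3 : j.val = i.val + 1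
            · rw [if_neg h2, if_pos h3, if_neg h1,
                if_neg (by omega : ¬ k.val = i.val + 1), mul_zero,
                if_neg (by omega : ¬ i.val = k.val)]
            · rw [if_neg h2, if_neg h3, zero_mul, if_neg (by omega : ¬ i.val = k.val)]
      · have hM : Mmat n j k = 0 := by
          simp only [Mmat, Matrix.of_apply, if_neg hd,
            if_neg (show ¬(j.val + 1 = k.val ∨ k.val + 1 = j.val) by omega)]
        rw [hM]
        apply Finset.sum_eq_zero
        intro i _
        simp only [Cmat, Matrix.of_apply]
        by_cases h1 : j.val = i.val
        · rw [if_pos h1, if_neg (by omega : ¬ k.val = i.val),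
            if_neg (by omega : ¬ k.val = i.val + 1), mul_zero]
        · by_cases h2 : j.val = i.val + 1
          · rw [if_neg h1, if_pos h2, if_neg (by omega : ¬ k.val = i.val),
              if_neg (by omega : ¬ k.val = i.val + 1), mul_zero]
          · rw [if_neg h1, if_neg h2, zero_mul]


lemma CCt (n : ℕ) (hn : 2 ≤ n) : Cmat n * (Cmat n)ᵀ = Kmat n := by
  ext i k
  rw [Matrix.mul_apply]
  simp only [Matrix.transpose_apply]
  have hi := i.isLt
  have hk := k.isLt
  by_cases hd : i = k
  · subst hd
    have hM : Kmat n i i = if i.val = 0 ∨ i.val + 1 = n then 12/35 else 2/7 := by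
      simp [Kmat]
    rw [hM]
    have hsum : dvec n i.val * dvec n i.val + dvec n (i.val+1) * dvec n (i.val+1)
        = if i.val = 0 ∨ i.val + 1 = n then 12/35 else 2/7 := by
      rw [dvec_sq, dvec_sq]
      have e1 : ¬ (i.val = n) := by omega
      have e2 : ¬ (i.val + 1 = 0) := by omega
      simp only [e1, e2, or_false, false_or]
      split_ifs <;> first | (exfalso; omega) | norm_num
    rw [← hsum]
    apply fin_sum_two (show i.val < n + 1 by omega) (show i.val + 1 < n + 1 by omega)
      (show i.val ≠ i.val + 1 by omega)
    intro jj
    simp only [Cmat, Matrix.of_apply]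
    by_cases h1 : jj.val = i.val
    · rw [if_pos h1, if_pos h1, h1]
    · by_cases h2 : jj.val = i.val + 1
      · rw [if_neg h1, if_pos h2, if_neg h1, if_pos h2, h2]
        ring
      · rw [if_neg h1, if_neg h2, zero_mul, if_neg h1, if_neg h2]
  · have hd' : ¬ i.val = k.val := fun h => hd (Fin.ext h)
    by_cases hadj1 : i.val + 1 = k.val
    · have hM : Kmat n i k = -(1/7) := by
        simp only [Kmat, Matrix.of_apply, if_neg hd, if_pos (Or.inl hadj1)]
      rw [hM]
      have hval : -(dvec n k.val) * dvec n k.val = -(1/7) := by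
        rw [neg_mul, dvec_sq, if_neg (by omega : ¬(k.val = 0 ∨ k.val = n))]
      rw [← hval]
      apply fin_sum_one (show k.val < n + 1 by omega)
      intro jj
      simp only [Cmat, Matrix.of_apply]
      by_cases h1 : jj.val = k.val
      · rw [if_neg (by omega : ¬ jj.val = i.val), if_pos (by omega : jj.val = i.val + 1),
          if_pos h1, if_pos h1, h1]
      · by_cases h2 : jj.val = i.val
        · rw [if_pos h2, if_neg h1, if_neg (by omega : ¬ jj.val = k.val + 1), mul_zero,
            if_neg h1]
        · by_cases h3 : jj.val = i.val + 1
          · exfalso; omega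
          · rw [if_neg h2, if_neg h3, zero_mul, if_neg h1]
    · by_cases hadj2 : k.val + 1 = i.val
      · have hM : Kmat n i k = -(1/7) := by
          simp only [Kmat, Matrix.of_apply, if_neg hd, if_pos (Or.inr hadj2)]
        rw [hM]
        have hval : -(dvec n i.val) * dvec n i.val = -(1/7) := by
          rw [neg_mul, dvec_sq, if_neg (by omega : ¬(i.val = 0 ∨ i.val = n))]
        rw [← hval]
        apply fin_sum_one (show i.val < n + 1 by omega)
        intro jj
        simp only [Cmat, Matrix.of_apply]
        by_cases h1 : jj.val = i.val
        · rw [if_pos h1, if_neg (by omega : ¬ jj.val = k.val),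
            if_pos (by omega : jj.val = k.val + 1), if_pos h1, h1]
          ring
        · by_cases h2 : jj.val = i.val + 1
          · rw [if_neg h1, if_pos h2, if_neg (by omega : ¬ jj.val = k.val),
              if_neg (by omega : ¬ jj.val = k.val + 1), mul_zero, if_neg h1]
          · rw [if_neg h1, if_neg h2, zero_mul, if_neg h1]
      · have hM : Kmat n i k = 0 := by
          simp only [Kmat, Matrix.of_apply, if_neg hd,
            if_neg (show ¬(i.val + 1 = k.val ∨ k.val + 1 = i.val) by omega)]
        rw [hM]
        apply Finset.sum_eq_zero
        intro jj _
        simp only [Cmat, Matrix.of_apply]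
        by_cases h1 : jj.val = i.val
        · rw [if_pos h1, if_neg (by omega : ¬ jj.val = k.val),
            if_neg (by omega : ¬ jj.val = k.val + 1), mul_zero]
        · by_cases h2 : jj.val = i.val + 1
          · rw [if_neg h1, if_pos h2, if_neg (by omega : ¬ jj.val = k.val),
              if_neg (by omega : ¬ jj.val = k.val + 1), mul_zero]
          · rw [if_neg h1, if_neg h2, zero_mul]

lemma KG (n : ℕ) (hn : 2 ≤ n) : Kmat n * Gmat n = 1 := by
  ext i j
  rw [Matrix.mul_apply, Matrix.one_apply]
  have hi := i.isLt
  have hj := j.isLt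
  have hden : (7*(n:ℝ)+3) ≠ 0 := by positivity
  by_cases hi0 : i.val = 0
  · by_cases hj0 : j.val = 0
    · rw [if_pos (show i = j by rw [Fin.ext_iff]; omega)]
      have hs : ∑ x : Fin n, Kmat n i x * Gmat n x j
          = (12/35)*((7*(0:ℝ)+5)*(7*(n:ℝ)-2-7*(0:ℝ))/(7*(n:ℝ)+3))
            + (-(1/7))*((7*(0:ℝ)+5)*(7*(n:ℝ)-2-7*(1:ℝ))/(7*(n:ℝ)+3)) := by
        apply fin_sum_two (show 0 < n by omega) (show 1 < n by omega) (by omega : (0:ℕ) ≠ 1)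
        intro k; have hk := k.isLt
        simp only [Kmat, Gmat, Matrix.of_apply]
        by_cases h1 : k.val = 0
        · rw [if_pos h1, if_pos (show i = k by rw [Fin.ext_iff]; omega), if_pos (Or.inl hi0),
            (show min k.val j.val = k.val by omega), (show max k.val j.val = j.val by omega),
            h1, hj0]
          push_cast; ring
        · by_cases h2 : k.val = 1
          · rw [if_neg h1, if_pos h2, if_neg (show ¬ i = k by rw [Fin.ext_iff]; omega),
              if_pos (Or.inl (show i.val + 1 = k.val by omega)),
              (show min k.val j.val = j.val by omega), (show max k.val j.val = k.val by omega),
              h2, hj0]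
            push_cast; ring
          · rw [if_neg h1, if_neg h2, if_neg (show ¬ i = k by rw [Fin.ext_iff]; omega),
              if_neg (show ¬(i.val + 1 = k.val ∨ k.val + 1 = i.val) by omega), zero_mul]
      rw [hs]; field_simp; ring
    · rw [if_neg (show ¬ i = j by rw [Fin.ext_iff]; omega)]
      have hs : ∑ x : Fin n, Kmat n i x * Gmat n x j
          = (12/35)*((7*(0:ℝ)+5)*(7*(n:ℝ)-2-7*(j.val:ℝ))/(7*(n:ℝ)+3))
            + (-(1/7))*((7*(1:ℝ)+5)*(7*(n:ℝ)-2-7*(j.val:ℝ))/(7*(n:ℝ)+3)) := by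
        apply fin_sum_two (show 0 < n by omega) (show 1 < n by omega) (by omega : (0:ℕ) ≠ 1)
        intro k; have hk := k.isLt
        simp only [Kmat, Gmat, Matrix.of_apply]
        by_cases h1 : k.val = 0
        · rw [if_pos h1, if_pos (show i = k by rw [Fin.ext_iff]; omega), if_pos (Or.inl hi0),
            (show min k.val j.val = k.val by omega), (show max k.val j.val = j.val by omega), h1]
          push_cast; ring
        · by_cases h2 : k.val = 1
          · rw [if_neg h1, if_pos h2, if_neg (show ¬ i = k by rw [Fin.ext_iff]; omega),
              if_pos (Or.inl (show i.val + 1 = k.val by omega)),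
              (show min k.val j.val = k.val by omega), (show max k.val j.val = j.val by omega), h2]
            push_cast; ring
          · rw [if_neg h1, if_neg h2, if_neg (show ¬ i = k by rw [Fin.ext_iff]; omega),
              if_neg (show ¬(i.val + 1 = k.val ∨ k.val + 1 = i.val) by omega), zero_mul]
      rw [hs]; field_simp; ring
  · by_cases hiN : i.val + 1 = n
    · have hir : ((i.val:ℕ):ℝ) = (n:ℝ) - 1 := by
        have h' : ((i.val:ℕ):ℝ) + 1 = (n:ℝ) := by exact_mod_cast hiN
        linarith
      by_cases hji : j.val = i.val
      · rw [if_pos (show i = j by rw [Fin.ext_iff]; omega)]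
        have hs : ∑ x : Fin n, Kmat n i x * Gmat n x j
            = (-(1/7))*((7*((i.val:ℝ)-1)+5)*(7*(n:ℝ)-2-7*(i.val:ℝ))/(7*(n:ℝ)+3))
              + (12/35)*((7*(i.val:ℝ)+5)*(7*(n:ℝ)-2-7*(i.val:ℝ))/(7*(n:ℝ)+3)) := by
          apply fin_sum_two (show i.val - 1 < n by omega) (show i.val < n by omega)
            (by omega : i.val - 1 ≠ i.val)
          intro k; have hk := k.isLt
          simp only [Kmat, Gmat, Matrix.of_apply]
          by_cases h1 : k.val = i.val - 1
          · have hkr : ((k.val:ℕ):ℝ) = (i.val:ℝ) - 1 := by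
              have h' : ((k.val:ℕ):ℝ) + 1 = ((i.val:ℕ):ℝ) := by
                exact_mod_cast (show k.val + 1 = i.val by omega)
              linarith
            rw [if_pos h1, if_neg (show ¬ i = k by rw [Fin.ext_iff]; omega),
              if_pos (Or.inr (show k.val + 1 = i.val by omega)),
              (show min k.val j.val = k.val by omega), (show max k.val j.val = j.val by omega),
              hji, hkr]
          · by_cases h2 : k.val = i.val
            · rw [if_neg h1, if_pos h2, if_pos (show i = k by rw [Fin.ext_iff]; omega),
                if_pos (Or.inr hiN),
                (show min k.val j.val = k.val by omega), (show max k.val j.val = j.val by omega),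
                hji, h2]
            · rw [if_neg h1, if_neg h2, if_neg (show ¬ i = k by rw [Fin.ext_iff]; omega),
                if_neg (show ¬(i.val + 1 = k.val ∨ k.val + 1 = i.val) by omega), zero_mul]
        rw [hs, hir]; field_simp; ring
      · rw [if_neg (show ¬ i = j by rw [Fin.ext_iff]; omega)]
        have hs : ∑ x : Fin n, Kmat n i x * Gmat n x j
            = (-(1/7))*((7*(j.val:ℝ)+5)*(7*(n:ℝ)-2-7*((i.val:ℝ)-1))/(7*(n:ℝ)+3))
              + (12/35)*((7*(j.val:ℝ)+5)*(7*(n:ℝ)-2-7*(i.val:ℝ))/(7*(n:ℝ)+3)) := by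
          apply fin_sum_two (show i.val - 1 < n by omega) (show i.val < n by omega)
            (by omega : i.val - 1 ≠ i.val)
          intro k; have hk := k.isLt
          simp only [Kmat, Gmat, Matrix.of_apply]
          by_cases h1 : k.val = i.val - 1
          · have hkr : ((k.val:ℕ):ℝ) = (i.val:ℝ) - 1 := by
              have h' : ((k.val:ℕ):ℝ) + 1 = ((i.val:ℕ):ℝ) := by
                exact_mod_cast (show k.val + 1 = i.val by omega)
              linarith
            rw [if_pos h1, if_neg (show ¬ i = k by rw [Fin.ext_iff]; omega),
              if_pos (Or.inr (show k.val + 1 = i.val by omega)),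
              (show min k.val j.val = j.val by omega), (show max k.val j.val = k.val by omega),
              hkr]
          · by_cases h2 : k.val = i.val
            · rw [if_neg h1, if_pos h2, if_pos (show i = k by rw [Fin.ext_iff]; omega),
                if_pos (Or.inr hiN),
                (show min k.val j.val = j.val by omega), (show max k.val j.val = k.val by omega),
                h2]
            · rw [if_neg h1, if_neg h2, if_neg (show ¬ i = k by rw [Fin.ext_iff]; omega),
                if_neg (show ¬(i.val + 1 = k.val ∨ k.val + 1 = i.val) by omega), zero_mul]
        rw [hs, hir]; field_simp; ring
    · -- interior row
      rcases Nat.lt_trichotomy j.val i.val with hjlt | hjeq | hjgt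
      · rw [if_neg (show ¬ i = j by rw [Fin.ext_iff]; omega)]
        have hs : ∑ x : Fin n, Kmat n i x * Gmat n x j
            = (-(1/7))*((7*(j.val:ℝ)+5)*(7*(n:ℝ)-2-7*((i.val:ℝ)-1))/(7*(n:ℝ)+3))
              + ((2/7)*((7*(j.val:ℝ)+5)*(7*(n:ℝ)-2-7*(i.val:ℝ))/(7*(n:ℝ)+3))
              + (-(1/7))*((7*(j.val:ℝ)+5)*(7*(n:ℝ)-2-7*((i.val:ℝ)+1))/(7*(n:ℝ)+3))) := by
          rw [← add_assoc]
          apply fin_sum_three (show i.val - 1 < n by omega) (show i.val < n by omega)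
            (show i.val + 1 < n by omega) (by omega) (by omega) (by omega)
          intro k; have hk := k.isLt
          simp only [Kmat, Gmat, Matrix.of_apply]
          by_cases h1 : k.val = i.val - 1
          · have hkr : ((k.val:ℕ):ℝ) = (i.val:ℝ) - 1 := by
              have h' : ((k.val:ℕ):ℝ) + 1 = ((i.val:ℕ):ℝ) := by
                exact_mod_cast (show k.val + 1 = i.val by omega)
              linarith
            rw [if_pos h1, if_neg (show ¬ i = k by rw [Fin.ext_iff]; omega),
              if_pos (Or.inr (show k.val + 1 = i.val by omega)),
              (show min k.val j.val = j.val by omega), (show max k.val j.val = k.val by omega),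
              hkr]
          · by_cases h2 : k.val = i.val
            · rw [if_neg h1, if_pos h2, if_pos (show i = k by rw [Fin.ext_iff]; omega),
                if_neg (show ¬(i.val = 0 ∨ i.val + 1 = n) by omega),
                (show min k.val j.val = j.val by omega), (show max k.val j.val = k.val by omega),
                h2]
            · by_cases h3 : k.val = i.val + 1
              · rw [if_neg h1, if_neg h2, if_pos h3,
                  if_neg (show ¬ i = k by rw [Fin.ext_iff]; omega),
                  if_pos (Or.inl (show i.val + 1 = k.val by omega)),
                  (show min k.val j.val = j.val by omega), (show max k.val j.val = k.val by omega),
                  h3]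
                push_cast; ring
              · rw [if_neg h1, if_neg h2, if_neg h3,
                  if_neg (show ¬ i = k by rw [Fin.ext_iff]; omega),
                  if_neg (show ¬(i.val + 1 = k.val ∨ k.val + 1 = i.val) by omega), zero_mul]
        rw [hs]; field_simp; ring
      · rw [if_pos (show i = j by rw [Fin.ext_iff]; omega)]
        have hs : ∑ x : Fin n, Kmat n i x * Gmat n x j
            = (-(1/7))*((7*((i.val:ℝ)-1)+5)*(7*(n:ℝ)-2-7*(i.val:ℝ))/(7*(n:ℝ)+3))
              + ((2/7)*((7*(i.val:ℝ)+5)*(7*(n:ℝ)-2-7*(i.val:ℝ))/(7*(n:ℝ)+3))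
              + (-(1/7))*((7*(i.val:ℝ)+5)*(7*(n:ℝ)-2-7*((i.val:ℝ)+1))/(7*(n:ℝ)+3))) := by
          rw [← add_assoc]
          apply fin_sum_three (show i.val - 1 < n by omega) (show i.val < n by omega)
            (show i.val + 1 < n by omega) (by omega) (by omega) (by omega)
          intro k; have hk := k.isLt
          simp only [Kmat, Gmat, Matrix.of_apply]
          by_cases h1 : k.val = i.val - 1
          · have hkr : ((k.val:ℕ):ℝ) = (i.val:ℝ) - 1 := by
              have h' : ((k.val:ℕ):ℝ) + 1 = ((i.val:ℕ):ℝ) := by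
                exact_mod_cast (show k.val + 1 = i.val by omega)
              linarith
            rw [if_pos h1, if_neg (show ¬ i = k by rw [Fin.ext_iff]; omega),
              if_pos (Or.inr (show k.val + 1 = i.val by omega)),
              (show min k.val j.val = k.val by omega), (show max k.val j.val = j.val by omega),
              hjeq, hkr]
          · by_cases h2 : k.val = i.val
            · rw [if_neg h1, if_pos h2, if_pos (show i = k by rw [Fin.ext_iff]; omega),
                if_neg (show ¬(i.val = 0 ∨ i.val + 1 = n) by omega),
                (show min k.val j.val = k.val by omega), (show max k.val j.val = j.val by omega),
                hjeq, h2]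
            · by_cases h3 : k.val = i.val + 1
              · rw [if_neg h1, if_neg h2, if_pos h3,
                  if_neg (show ¬ i = k by rw [Fin.ext_iff]; omega),
                  if_pos (Or.inl (show i.val + 1 = k.val by omega)),
                  (show min k.val j.val = j.val by omega), (show max k.val j.val = k.val by omega),
                  hjeq, h3]
                push_cast; ring
              · rw [if_neg h1, if_neg h2, if_neg h3,
                  if_neg (show ¬ i = k by rw [Fin.ext_iff]; omega),
                  if_neg (show ¬(i.val + 1 = k.val ∨ k.val + 1 = i.val) by omega), zero_mul]
        rw [hs]; field_simp; ring
      · rw [if_neg (show ¬ i = j by rw [Fin.ext_iff]; omega)]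
        have hs : ∑ x : Fin n, Kmat n i x * Gmat n x j
            = (-(1/7))*((7*((i.val:ℝ)-1)+5)*(7*(n:ℝ)-2-7*(j.val:ℝ))/(7*(n:ℝ)+3))
              + ((2/7)*((7*(i.val:ℝ)+5)*(7*(n:ℝ)-2-7*(j.val:ℝ))/(7*(n:ℝ)+3))
              + (-(1/7))*((7*((i.val:ℝ)+1)+5)*(7*(n:ℝ)-2-7*(j.val:ℝ))/(7*(n:ℝ)+3))) := by
          rw [← add_assoc]
          apply fin_sum_three (show i.val - 1 < n by omega) (show i.val < n by omega)
            (show i.val + 1 < n by omega) (by omega) (by omega) (by omega)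
          intro k; have hk := k.isLt
          simp only [Kmat, Gmat, Matrix.of_apply]
          by_cases h1 : k.val = i.val - 1
          · have hkr : ((k.val:ℕ):ℝ) = (i.val:ℝ) - 1 := by
              have h' : ((k.val:ℕ):ℝ) + 1 = ((i.val:ℕ):ℝ) := by
                exact_mod_cast (show k.val + 1 = i.val by omega)
              linarith
            rw [if_pos h1, if_neg (show ¬ i = k by rw [Fin.ext_iff]; omega),
              if_pos (Or.inr (show k.val + 1 = i.val by omega)),
              (show min k.val j.val = k.val by omega), (show max k.val j.val = j.val by omega),
              hkr]
          · by_cases h2 : k.val = i.val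
            · rw [if_neg h1, if_pos h2, if_pos (show i = k by rw [Fin.ext_iff]; omega),
                if_neg (show ¬(i.val = 0 ∨ i.val + 1 = n) by omega),
                (show min k.val j.val = k.val by omega), (show max k.val j.val = j.val by omega),
                h2]
            · by_cases h3 : k.val = i.val + 1
              · rw [if_neg h1, if_neg h2, if_pos h3,
                  if_neg (show ¬ i = k by rw [Fin.ext_iff]; omega),
                  if_pos (Or.inl (show i.val + 1 = k.val by omega)),
                  (show min k.val j.val = k.val by omega), (show max k.val j.val = j.val by omega),
                  h3]
                push_cast; ring
              · rw [if_neg h1, if_neg h2, if_neg h3,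
                  if_neg (show ¬ i = k by rw [Fin.ext_iff]; omega),
                  if_neg (show ¬(i.val + 1 = k.val ∨ k.val + 1 = i.val) by omega), zero_mul]
        rw [hs]; field_simp; ring

lemma charpoly_eval {m : ℕ} (M : Matrix (Fin m) (Fin m) ℝ) (t : ℝ) :
    M.charpoly.eval t = (t • 1 - M).det := by
  rw [Matrix.charpoly, ← Polynomial.coe_evalRingHom, RingHom.map_det]
  congr 1
  ext i j
  by_cases h : i = j
  · subst h; simp [charmatrix_apply_eq]
  · simp [charmatrix_apply_ne _ _ _ h, Matrix.one_apply_ne h]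

lemma charfact (n : ℕ) (hn : 2 ≤ n) :
    (Mmat n).charpoly = X * (Kmat n).charpoly := by
  classical
  let F := FractionRing ℝ[X]
  let φ : ℝ[X] →+* F := algebraMap ℝ[X] F
  have hinj : Function.Injective φ := IsFractionRing.injective ℝ[X] F
  apply hinj
  let ψ : ℝ →+* F := φ.comp (Polynomial.C)
  have key : ∀ (m : ℕ) (A : Matrix (Fin m) (Fin m) ℝ),
      φ A.charpoly = ((φ X) • (1 : Matrix (Fin m) (Fin m) F) - A.map ψ).det := by
    intro m A
    rw [Matrix.charpoly, RingHom.map_det]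
    congr 1
    ext i j
    by_cases h : i = j
    · subst h
      simp [charmatrix_apply_eq, Matrix.map_apply, Matrix.sub_apply, Matrix.smul_apply,
        Matrix.one_apply_eq, map_sub, ψ, smul_eq_mul, mul_one]
    · simp [charmatrix_apply_ne _ _ _ h, Matrix.map_apply, Matrix.sub_apply, Matrix.smul_apply,
        Matrix.one_apply_ne h, map_neg, ψ, smul_eq_mul, mul_zero]
  have hx : (φ X) ≠ 0 := by
    intro h
    exact Polynomial.X_ne_zero (hinj (by rw [h, map_zero]))
  set A : Matrix (Fin n) (Fin (n+1)) F := (Cmat n).map ψ with hA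
  have hM : (Mmat n).map ψ = Aᵀ * A := by
    rw [← CtC n hn, Matrix.map_mul, Matrix.transpose_map]
  have hK : (Kmat n).map ψ = A * Aᵀ := by
    rw [← CCt n hn, Matrix.map_mul, Matrix.transpose_map]
  rw [_root_.map_mul φ X ((Kmat n).charpoly), key (n+1) (Mmat n), key n (Kmat n), hM, hK]
  have e1 : (φ X) • (1 : Matrix (Fin (n+1)) (Fin (n+1)) F) - Aᵀ * A
      = (φ X) • ((1 : Matrix (Fin (n+1)) (Fin (n+1)) F) - Aᵀ * ((φ X)⁻¹ • A)) := by
    rw [Matrix.mul_smul, smul_sub, smul_smul, mul_inv_cancel₀ hx, one_smul]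
  have e2 : (φ X) • (1 : Matrix (Fin n) (Fin n) F) - A * Aᵀ
      = (φ X) • ((1 : Matrix (Fin n) (Fin n) F) - ((φ X)⁻¹ • A) * Aᵀ) := by
    rw [Matrix.smul_mul, smul_sub, smul_smul, mul_inv_cancel₀ hx, one_smul]
  rw [e1, e2, Matrix.det_smul, Matrix.det_smul, Matrix.det_one_sub_mul_comm]
  simp only [Fintype.card_fin]
  ring

lemma detK_ne (n : ℕ) (hn : 2 ≤ n) : (Kmat n).det ≠ 0 := by
  intro h
  have h1 : (Kmat n * Gmat n).det = 1 := by rw [KG n hn]; simp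
  rw [Matrix.det_mul, h, zero_mul] at h1
  exact zero_ne_one h1

lemma K_root_pos (n : ℕ) (hn : 2 ≤ n) (t : ℝ) (ht : (Kmat n).charpoly.eval t = 0) : 0 < t := by
  have hdet : (t • (1 : Matrix (Fin n) (Fin n) ℝ) - Kmat n).det = 0 := by
    rw [← charpoly_eval]; exact ht
  obtain ⟨v, hv0, hv⟩ := Matrix.exists_mulVec_eq_zero_iff.mpr hdet
  have hKv : (Kmat n) *ᵥ v = t • v := by
    have h1 : (t • (1 : Matrix (Fin n) (Fin n) ℝ)) *ᵥ v - (Kmat n) *ᵥ v = 0 := by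
      rw [← Matrix.sub_mulVec]; exact hv
    rw [Matrix.smul_mulVec, Matrix.one_mulVec] at h1
    exact (sub_eq_zero.mp h1).symm
  set w : Fin (n+1) → ℝ := (Cmat n)ᵀ *ᵥ v with hw
  have hquad : v ⬝ᵥ ((Kmat n) *ᵥ v) = w ⬝ᵥ w := by
    rw [← CCt n hn, ← Matrix.mulVec_mulVec, Matrix.dotProduct_mulVec, hw,
      Matrix.mulVec_transpose]
  have hts : v ⬝ᵥ (t • v) = t * (v ⬝ᵥ v) := by
    rw [dotProduct_smul, smul_eq_mul]
  have heq : t * (v ⬝ᵥ v) = w ⬝ᵥ w := by rw [← hts, ← hKv, hquad]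
  have hww : 0 ≤ w ⬝ᵥ w := Finset.sum_nonneg fun i _ => mul_self_nonneg _
  have hvnn : 0 ≤ v ⬝ᵥ v := Finset.sum_nonneg fun i _ => mul_self_nonneg _
  have hvne : v ⬝ᵥ v ≠ 0 := fun h => hv0 (dotProduct_self_eq_zero.mp h)
  have hvv : 0 < v ⬝ᵥ v := lt_of_le_of_ne hvnn (Ne.symm hvne)
  have ht0 : 0 ≤ t := by nlinarith
  rcases eq_or_lt_of_le ht0 with h0 | h0
  · exfalso
    rw [← h0] at ht
    have hK0 := ht
    rw [charpoly_eval, zero_smul, zero_sub, Matrix.det_neg] at hK0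
    rcases mul_eq_zero.mp hK0 with h' | h'
    · exact absurd h' (pow_ne_zero _ (by norm_num))
    · exact detK_ne n hn h'
  · exact h0

lemma sum_id (n : ℕ) : (∑ i ∈ Finset.range n, (i:ℝ)) = ((n:ℝ)^2 - n)/2 := by
  induction n with
  | zero => simp
  | succ m ih => rw [Finset.sum_range_succ, ih]; push_cast; ring

lemma sum_sq (n : ℕ) : (∑ i ∈ Finset.range n, (i:ℝ)^2) = (2*(n:ℝ)^3 - 3*(n:ℝ)^2 + n)/6 := by
  induction n with
  | zero => simp
  | succ m ih => rw [Finset.sum_range_succ, ih]; push_cast; ring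

lemma traceG (n : ℕ) (hn : 2 ≤ n) :
    (Gmat n).trace
      = (49 * (n : ℝ)^3 + 63 * (n : ℝ)^2 + 38 * (n : ℝ)) / (6 * (7 * (n : ℝ) + 3)) := by
  have hden : (7*(n:ℝ)+3) ≠ 0 := by positivity
  rw [Matrix.trace]
  have hdiag : ∀ i : Fin n, (Gmat n).diag i
      = (7*(i.val:ℝ)+5) * (7*(n:ℝ)-2-7*(i.val:ℝ)) / (7*(n:ℝ)+3) := by
    intro i
    simp [Matrix.diag_apply, Gmat, min_self, max_self]
  rw [Finset.sum_congr rfl (fun i _ => hdiag i)]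
  rw [Fin.sum_univ_eq_sum_range (fun i => (7*(i:ℝ)+5) * (7*(n:ℝ)-2-7*(i:ℝ)) / (7*(n:ℝ)+3))]
  rw [← Finset.sum_div]
  have hnum : (∑ i ∈ Finset.range n, (7*(i:ℝ)+5) * (7*(n:ℝ)-2-7*(i:ℝ)))
      = (49*(n:ℝ)^3 + 63*(n:ℝ)^2 + 38*(n:ℝ))/6 := by
    rw [Finset.sum_congr rfl (fun (i : ℕ) _ => show (7*(i:ℝ)+5) * (7*(n:ℝ)-2-7*(i:ℝ))
      = (-49)*(i:ℝ)^2 + ((49*(n:ℝ)-49)*(i:ℝ) + (35*(n:ℝ)-10)) from by ring)]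
    rw [Finset.sum_add_distrib, Finset.sum_add_distrib, ← Finset.mul_sum, ← Finset.mul_sum,
      Finset.sum_const, Finset.card_range, nsmul_eq_mul, sum_id, sum_sq]
    ring
  rw [hnum]
  field_simp

lemma eval_deriv_prod {ι : Type*} [DecidableEq ι] (s : Finset ι) (f : ι → ℝ) :
    Polynomial.eval 0 (Polynomial.derivative (∏ j ∈ s, (X - C (f j))))
      = ∑ j ∈ s, ∏ k ∈ s.erase j, (0 - f k) := by
  induction s using Finset.induction_on with
  | empty => simp
  | @insert a s' ha ih =>
    rw [Finset.prod_insert ha, Polynomial.derivative_mul, Polynomial.eval_add,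
      Polynomial.eval_mul, Polynomial.eval_mul]
    simp only [Polynomial.derivative_sub, Polynomial.derivative_X, Polynomial.derivative_C,
      sub_zero, Polynomial.eval_one, one_mul, Polynomial.eval_sub, Polynomial.eval_X,
      Polynomial.eval_C]
    rw [ih, Finset.sum_insert ha, Finset.erase_insert ha]
    have h1 : Polynomial.eval 0 (∏ k ∈ s', (X - C (f k))) = ∏ k ∈ s', (0 - f k) := by
      simp [Polynomial.eval_prod]
    rw [h1, Finset.mul_sum]
    congr 1
    apply Finset.sum_congr rfl
    intro j hj
    have hja : j ≠ a := fun hh => ha (by rw [← hh]; exact hj)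
    rw [Finset.erase_insert_of_ne hja.symm,
      Finset.prod_insert (fun hh => ha (Finset.mem_of_mem_erase hh))]

/-- Let `α_1 ≤ α_2 ≤ … ≤ α_{n+1}` be the eigenvalues (with multiplicity) of `M`.
Then `α_1 = 0` is a simple eigenvalue, `α_i > 0` for `2 ≤ i ≤ n+1`, and
`∑_{i=2}^{n+1} 1/α_i = (49n³ + 63n² + 38n)/(6(7n+3))`. -/
theorem sum_inv_eigenvalues_Mmat (n : ℕ) (hn : 2 ≤ n)
    (α : Fin (n+1) → ℝ) (hmono : Monotone α)
    (hchar : (Mmat n).charpoly = ∏ i, (X - C (α i))) :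
    α 0 = 0 ∧ (∀ i : Fin (n+1), i.val ≠ 0 → 0 < α i) ∧
      (∑ i ∈ Finset.univ.filter (fun i : Fin (n+1) => i.val ≠ 0), 1 / α i)
        = (49 * (n : ℝ)^3 + 63 * (n : ℝ)^2 + 38 * (n : ℝ)) / (6 * (7 * (n : ℝ) + 3)) := by
  classical
  have hfact : (∏ i, (X - C (α i))) = X * (Kmat n).charpoly := by
    rw [← hchar]; exact charfact n hn
  have hroot : ∀ i : Fin (n+1), α i = 0 ∨ 0 < α i := by
    intro i
    have hev : Polynomial.eval (α i) (∏ j, (X - C (α j))) = 0 := by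
      rw [Polynomial.eval_prod]
      apply Finset.prod_eq_zero (Finset.mem_univ i)
      simp
    rw [hfact, Polynomial.eval_mul, Polynomial.eval_X] at hev
    rcases mul_eq_zero.mp hev with h | h
    · exact Or.inl h
    · exact Or.inr (K_root_pos n hn _ h)
  have hzero : ∃ i, α i = 0 := by
    have h0 : (∏ i, (0 - α i)) = 0 := by
      have hc := congrArg (Polynomial.eval 0) hfact
      simp only [Polynomial.eval_prod, Polynomial.eval_mul, Polynomial.eval_X, zero_mul,
        Polynomial.eval_sub, Polynomial.eval_C] at hc
      exact hc
    obtain ⟨i, -, hi⟩ := Finset.prod_eq_zero_iff.mp h0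
    exact ⟨i, by linarith⟩
  obtain ⟨i0, hi0⟩ := hzero
  have hα0 : α 0 = 0 := by
    rcases hroot 0 with h | h
    · exact h
    · have h1 : α 0 ≤ α i0 := hmono (Fin.zero_le i0)
      rw [hi0] at h1
      linarith
  have hKeval0 : (Kmat n).charpoly.eval 0 ≠ 0 := by
    rw [charpoly_eval, zero_smul, zero_sub, Matrix.det_neg]
    intro h
    rcases mul_eq_zero.mp h with h' | h'
    · exact absurd h' (pow_ne_zero _ (by norm_num))
    · exact detK_ne n hn h'
  have hpos : ∀ i : Fin (n+1), i.val ≠ 0 → 0 < α i := by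
    intro i hi
    rcases hroot i with h | h
    · exfalso
      have hne : i ≠ 0 := fun hh => hi (by rw [hh]; rfl)
      have hsplit : (∏ j, (X - C (α j)))
          = (X - C (α 0)) * ((X - C (α i))
            * ∏ j ∈ (Finset.univ.erase (0 : Fin (n+1))).erase i, (X - C (α j))) := by
        rw [← Finset.mul_prod_erase _ _ (Finset.mem_univ (0 : Fin (n+1))),
          ← Finset.mul_prod_erase _ _ (Finset.mem_erase.mpr ⟨hne, Finset.mem_univ i⟩)]
      rw [hsplit, hα0, h, map_zero, sub_zero] at hfact
      have h2 := mul_left_cancel₀ (Polynomial.X_ne_zero (R := ℝ)) hfact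
      apply hKeval0
      rw [← h2, Polynomial.eval_mul, Polynomial.eval_X, zero_mul]
    · exact h
  refine ⟨hα0, hpos, ?_⟩
  have hS : Finset.univ.filter (fun i : Fin (n+1) => i.val ≠ 0) = Finset.univ.erase 0 := by
    ext i
    simp only [Finset.mem_filter, Finset.mem_erase, Finset.mem_univ, and_true, true_and, ne_eq, Fin.ext_iff,
      Fin.val_zero]
  rw [hS]
  set s : Finset (Fin (n+1)) := Finset.univ.erase 0 with hsdef
  have hq : (∏ j ∈ s, (X - C (α j))) = (Kmat n).charpoly := by
    apply mul_left_cancel₀ (Polynomial.X_ne_zero (R := ℝ))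
    rw [← hfact, hsdef, ← Finset.mul_prod_erase _ _ (Finset.mem_univ (0 : Fin (n+1))), hα0,
      map_zero, sub_zero]
  have hcm : Matrix.charmatrix (Kmat n)
      = ((-(Kmat n)).map C) * (1 + (X:ℝ[X]) • ((-(Gmat n)).map C)) := by
    rw [Matrix.mul_add, Matrix.mul_one, Matrix.mul_smul, ← Matrix.map_mul]
    have hKG : (-(Kmat n)) * (-(Gmat n)) = 1 := by
      rw [Matrix.neg_mul, Matrix.mul_neg, neg_neg, KG n hn]
    rw [hKG]
    ext i j
    by_cases h : i = j
    · subst h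
      simp only [charmatrix_apply_eq, Matrix.add_apply, Matrix.map_apply, Matrix.smul_apply,
        Matrix.one_apply_eq, Matrix.neg_apply, smul_eq_mul, Polynomial.C_1, mul_one, map_neg]
      ring
    · simp only [charmatrix_apply_ne _ _ _ h, Matrix.add_apply, Matrix.map_apply,
        Matrix.smul_apply, Matrix.one_apply_ne h, Matrix.neg_apply, smul_eq_mul,
        Polynomial.C_0, mul_zero, add_zero, map_neg]
  have hfactor : (Kmat n).charpoly
      = C ((-(Kmat n)).det) * (1 + (X:ℝ[X]) • ((-(Gmat n)).map C)).det := by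
    rw [Matrix.charpoly, hcm, Matrix.det_mul, ← RingHom.mapMatrix_apply, ← RingHom.map_det]
  have hche0 : (Kmat n).charpoly.eval 0 = (-(Kmat n)).det := by
    rw [hfactor, Polynomial.eval_mul, Polynomial.eval_C]
    have h1 := eval_det_add_X_smul (1 : Matrix (Fin n) (Fin n) ℝ[X]) (-(Gmat n))
    rw [h1, Matrix.det_one, Polynomial.eval_one, mul_one]
  have hchd0 : (Kmat n).charpoly.derivative.eval 0
      = (-(Kmat n)).det * Matrix.trace (-(Gmat n)) := by
    rw [hfactor, Polynomial.derivative_mul, Polynomial.derivative_C, zero_mul, zero_add,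
      Polynomial.eval_mul, Polynomial.eval_C, Matrix.derivative_det_one_add_X_smul]
  have hαne : ∀ j ∈ s, α j ≠ 0 := by
    intro j hj
    have hjv : j.val ≠ 0 := by
      have h1 := (Finset.mem_erase.mp hj).1
      intro hh
      exact h1 (Fin.ext (by simpa using hh))
    exact ne_of_gt (hpos j hjv)
  have he0 : ((Kmat n).charpoly).eval 0 = ∏ j ∈ s, (0 - α j) := by
    rw [← hq, Polynomial.eval_prod]
    simp
  have he1 : ((Kmat n).charpoly).derivative.eval 0
      = ∑ j ∈ s, ∏ k ∈ s.erase j, (0 - α k) := by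
    rw [← hq]
    exact eval_deriv_prod s α
  have hdKne : (-(Kmat n)).det ≠ 0 := by
    rw [Matrix.det_neg]
    exact mul_ne_zero (pow_ne_zero _ (by norm_num)) (detK_ne n hn)
  have key : (∑ j ∈ s, 1 / α j) * ((-(Kmat n)).det)
      = - ∑ j ∈ s, ∏ k ∈ s.erase j, (0 - α k) := by
    have hprod : (-(Kmat n)).det = ∏ j ∈ s, (0 - α j) := by rw [← hche0, he0]
    rw [hprod, Finset.sum_mul, ← Finset.sum_neg_distrib]
    apply Finset.sum_congr rfl
    intro j hj
    rw [← Finset.mul_prod_erase _ _ hj]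
    have hne := hαne j hj
    field_simp
    ring
  have htr : (∑ j ∈ s, 1 / α j) = (Gmat n).trace := by
    have h1 : (∑ j ∈ s, 1 / α j) * ((-(Kmat n)).det)
        = (Gmat n).trace * ((-(Kmat n)).det) := by
      rw [key, ← he1, hchd0, Matrix.trace_neg]
      ring
    exact mul_right_cancel₀ hdKne h1
  rw [htr]
  exact traceG n hn
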